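/- Vanishing of the zero Fourier mode after the nonlinear change of variable: let y ≥ 0 and define α(a) = a - sin(2a)/(2·cosh(2(y+Ψ))), a strictly increasing bijection of [0,2π]. Let ω₀ : ℝ → ℝ be continuous and 2π-periodic with ∫₀^{2π} W(a,y)·ω₀(a) da = 0, and define ω̃(α) = ω₀(a(α))·cosh(2(y+Ψ)) where a(α) is the inverse of α. Then ∫₀^{2π} ω̃(α) dα = 0. -/

import Mathlib

open Real MeasureTheory intervalIntegral

/-- Vanishing of the zero Fourier mode of `ω̃` after the change of variable `a ↦ α`. -/
theorem zero_mode_vanishes (C Ψ : ℝ) (hC : 0 < C) (hΨ : 0 < Ψ) (y : ℝ) (hy : 0 ≤ y)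
    (ainv : ℝ → ℝ)
    (hleft : ∀ a : ℝ, ainv (a - Real.sin (2 * a) / (2 * Real.cosh (2 * (y + Ψ)))) = a)
    (hright : ∀ b : ℝ,
      ainv b - Real.sin (2 * ainv b) / (2 * Real.cosh (2 * (y + Ψ))) = b)
    (ω₀ : ℝ → ℝ) (hcont : Continuous ω₀) (hper : ∀ a : ℝ, ω₀ (a + 2 * π) = ω₀ a)
    (hmean : ∫ a in (0:ℝ)..(2 * π),
      (C ^ 2 / 2 * (Real.cosh (2 * (y + Ψ)) - Real.cos (2 * a))) * ω₀ a = 0) :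
    ∫ b in (0:ℝ)..(2 * π), ω₀ (ainv b) * Real.cosh (2 * (y + Ψ)) = 0 := by
  set K : ℝ := Real.cosh (2 * (y + Ψ)) with hKdef
  have hK1 : 1 < K := by
    rw [hKdef, Real.one_lt_cosh]
    positivity
  have hK0 : 0 < K := lt_trans one_pos hK1
  set f : ℝ → ℝ := fun a => a - Real.sin (2 * a) / (2 * K) with hfdef
  -- derivative of f
  have hderiv : ∀ a : ℝ, HasDerivAt f (1 - Real.cos (2 * a) / K) a := by
    intro a
    have h1 : HasDerivAt (fun a : ℝ => Real.sin (2 * a)) (Real.cos (2 * a) * 2) a := by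
      have hinner : HasDerivAt (fun x : ℝ => 2 * x) 2 a := by
        simpa using (hasDerivAt_id a).const_mul 2
      exact (Real.hasDerivAt_sin (2 * a)).comp a hinner
    have h2 : HasDerivAt (fun a : ℝ => Real.sin (2 * a) / (2 * K))
        (Real.cos (2 * a) * 2 / (2 * K)) a := h1.div_const _
    have h3 := (hasDerivAt_id a).sub h2
    have heq : 1 - Real.cos (2 * a) * 2 / (2 * K) = 1 - Real.cos (2 * a) / K := by
      field_simp
    rw [heq] at h3; exact h3
  -- f is strictly monotone
  have hf'pos : ∀ a : ℝ, 0 < 1 - Real.cos (2 * a) / K := by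
    intro a
    have h1 : Real.cos (2 * a) / K ≤ 1 / K :=
      div_le_div_of_nonneg_right (Real.cos_le_one _) hK0.le |>.trans_eq rfl
    have h2 : (1 : ℝ) / K < 1 := by
      rw [div_lt_one hK0]; exact hK1
    linarith
  have hfmono : StrictMono f :=
    strictMono_of_deriv_pos (fun a => by
      rw [(hderiv a).deriv]; exact hf'pos a)
  -- ainv is strictly monotone and surjective
  have hainv_mono : StrictMono ainv := by
    intro b₁ b₂ hb
    by_contra h
    push_neg at h
    have h2 := hfmono.monotone h
    have e1 : f (ainv b₂) = b₂ := hright b₂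
    have e2 : f (ainv b₁) = b₁ := hright b₁
    rw [e1, e2] at h2
    exact absurd h2 (not_le.mpr hb)
  have hainv_surj : Function.Surjective ainv := fun a => ⟨f a, hleft a⟩
  have hainv_cont : Continuous ainv :=
    (hainv_mono.orderIsoOfSurjective ainv hainv_surj).continuous
  -- continuity of the integrand
  have hg : Continuous fun b => ω₀ (ainv b) * K :=
    (hcont.comp hainv_cont).mul continuous_const
  -- change of variables
  have hsub := intervalIntegral.integral_comp_smul_deriv
    (a := 0) (b := 2 * π) (f := f) (f' := fun a => 1 - Real.cos (2 * a) / K)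
    (g := fun b => ω₀ (ainv b) * K)
    (fun x _ => hderiv x)
    (Continuous.continuousOn (by continuity)) hg
  have hf0 : f 0 = 0 := by simp [hfdef]
  have hf2π : f (2 * π) = 2 * π := by
    have h4 : Real.sin (2 * (2 * π)) = 0 := by
      have : (2 : ℝ) * (2 * π) = 2 * (2 * π) := rfl
      rw [show (2 : ℝ) * (2 * π) = 2 * π + 2 * π by ring, Real.sin_add_two_pi,
        Real.sin_two_pi]
    simp [hfdef, h4]
  rw [hf0, hf2π] at hsub
  rw [← hsub]
  -- rewrite the integrand using hleft
  have hintg : ∀ a : ℝ, (1 - Real.cos (2 * a) / K) •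
      ((fun b => ω₀ (ainv b) * K) ∘ f) a
      = (2 / C ^ 2) * ((C ^ 2 / 2 * (K - Real.cos (2 * a))) * ω₀ a) := by
    intro a
    have : ainv (f a) = a := hleft a
    simp only [Function.comp_apply, this, smul_eq_mul]
    have hC2 : (C : ℝ) ^ 2 ≠ 0 := by positivity
    field_simp
  calc ∫ x in (0:ℝ)..(2 * π), (1 - Real.cos (2 * x) / K) •
        ((fun b => ω₀ (ainv b) * K) ∘ f) x
      = ∫ x in (0:ℝ)..(2 * π),
        (2 / C ^ 2) * ((C ^ 2 / 2 * (K - Real.cos (2 * x))) * ω₀ x) := by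
        apply intervalIntegral.integral_congr
        intro x _
        exact hintg x
    _ = (2 / C ^ 2) * ∫ x in (0:ℝ)..(2 * π),
        (C ^ 2 / 2 * (K - Real.cos (2 * x))) * ω₀ x :=
        intervalIntegral.integral_const_mul _ _
    _ = 0 := by rw [hmean]; ring
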